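/- Let ν be a σ-finite measure on ℝ^d and f a ν-measurable function with |f|^p integrable for 1 ≤ p < ∞. Then ∫_{ℝ^d} |f(x)|^p dν(x) = ∫_0^∞ (f^*(t))^p dt, where f^*(t) = inf{s ≥ 0 : D_f(s) ≤ t} is the decreasing rearrangement of f and D_f is its distribution function with respect to ν. -/

import Mathlib

open MeasureTheory Set

/-- The decreasing rearrangement of `f` with respect to the measure `ν`:
`f^*(t) = inf {s ≥ 0 : ν {x : |f x| > s} ≤ t}`. -/
noncomputable def decreasingRearrangement {α : Type*} [MeasurableSpace α]
    (ν : Measure α) (f : α → ℝ) (t : ℝ) : ℝ :=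
  sInf {s : ℝ | 0 ≤ s ∧ ν {x | s < |f x|} ≤ ENNReal.ofReal t}

/-- The distribution function. -/
noncomputable def distFun {α : Type*} [MeasurableSpace α]
    (ν : Measure α) (f : α → ℝ) (s : ℝ) : ENNReal :=
  ν {x | s < |f x|}

lemma decreasingRearrangement_eq {α : Type*} [MeasurableSpace α]
    (ν : Measure α) (f : α → ℝ) (t : ℝ) :
    decreasingRearrangement ν f t
      = sInf {s : ℝ | 0 ≤ s ∧ distFun ν f s ≤ ENNReal.ofReal t} := rfl

lemma distFun_antitone {α : Type*} [MeasurableSpace α]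
    (ν : Measure α) (f : α → ℝ) : Antitone (distFun ν f) := by
  intro s s' h
  exact measure_mono fun x hx => lt_of_le_of_lt h hx

lemma decreasingRearrangement_nonneg {α : Type*} [MeasurableSpace α]
    (ν : Measure α) (f : α → ℝ) (t : ℝ) : 0 ≤ decreasingRearrangement ν f t :=
  Real.sInf_nonneg fun _ hx => hx.1

/-- Right continuity expressed via a countable supremum. -/
lemma distFun_iSup {α : Type*} [MeasurableSpace α]
    (ν : Measure α) (f : α → ℝ) (s : ℝ) :
    distFun ν f s = ⨆ n : ℕ, distFun ν f (s + 1 / (n + 1)) := by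
  have hU : {x | s < |f x|} = ⋃ n : ℕ, {x | s + 1 / ((n : ℝ) + 1) < |f x|} := by
    ext x
    simp only [mem_setOf_eq, mem_iUnion]
    constructor
    · intro h
      obtain ⟨n, hn⟩ := exists_nat_one_div_lt (sub_pos.mpr h)
      exact ⟨n, by linarith⟩
    · rintro ⟨n, hn⟩
      have h0 : (0 : ℝ) < 1 / ((n : ℝ) + 1) := by positivity
      linarith
  have hmono : Monotone fun n : ℕ => {x : α | s + 1 / ((n : ℝ) + 1) < |f x|} := by
    intro n m hnm x hx
    simp only [mem_setOf_eq] at *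
    have h1 : 1 / ((m : ℝ) + 1) ≤ 1 / ((n : ℝ) + 1) := by
      apply one_div_le_one_div_of_le (by positivity)
      exact_mod_cast Nat.succ_le_succ hnm
    linarith
  simp only [distFun]
  rw [hU, (hmono.directed_le).measure_iUnion]

theorem integral_rpow_eq_integral_rearrangement (d : ℕ)
    (ν : Measure (EuclideanSpace ℝ (Fin d))) [SigmaFinite ν]
    (p : ℝ) (hp : 1 ≤ p) (f : EuclideanSpace ℝ (Fin d) → ℝ)
    (hf : Measurable f)
    (hint : Integrable (fun x => |f x| ^ p) ν) :
    ∫ x, |f x| ^ p ∂ν =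
      ∫ t in Set.Ioi (0:ℝ), (decreasingRearrangement ν f t) ^ p := by
  have hp0 : (0 : ℝ) < p := lt_of_lt_of_le one_pos hp
  have habs : Measurable fun x => |f x| := hf.abs
  set D := distFun ν f with hD
  set r := decreasingRearrangement ν f with hr
  -- finiteness of the lintegral
  have hC : ∫⁻ x, ENNReal.ofReal (|f x| ^ p) ∂ν < ⊤ := by
    have h := hint.hasFiniteIntegral
    rwa [hasFiniteIntegral_iff_ofReal
      (Filter.Eventually.of_forall fun x => Real.rpow_nonneg (abs_nonneg _) p)] at h
  have hpowM : Measurable fun y : ℝ => y ^ p := by fun_prop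
  have hmbleP : AEMeasurable (fun x => ENNReal.ofReal (|f x| ^ p)) ν :=
    ((hpowM.comp habs).ennreal_ofReal).aemeasurable
  -- D is finite on (0, ∞)
  have hDfin : ∀ s : ℝ, 0 < s → D s < ⊤ := by
    intro s hs
    have hε0 : ENNReal.ofReal (s ^ p) ≠ 0 :=
      (ENNReal.ofReal_pos.mpr (Real.rpow_pos_of_pos hs p)).ne'
    have hsub : {x | s < |f x|} ⊆
        {x | ENNReal.ofReal (s ^ p) ≤ ENNReal.ofReal (|f x| ^ p)} := fun x hx =>
      ENNReal.ofReal_le_ofReal (Real.rpow_le_rpow hs.le (le_of_lt hx) hp0.le)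
    calc D s ≤ ν {x | ENNReal.ofReal (s ^ p) ≤ ENNReal.ofReal (|f x| ^ p)} :=
          measure_mono hsub
      _ ≤ (∫⁻ x, ENNReal.ofReal (|f x| ^ p) ∂ν) / ENNReal.ofReal (s ^ p) :=
          meas_ge_le_lintegral_div hmbleP hε0 ENNReal.ofReal_ne_top
      _ < ⊤ := ENNReal.div_lt_top hC.ne hε0
  -- the defining set is nonempty for t > 0
  have hSne : ∀ t : ℝ, 0 < t →
      {s : ℝ | 0 ≤ s ∧ D s ≤ ENNReal.ofReal t}.Nonempty := by
    intro t ht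
    have hInt : (⋂ n : ℕ, {x : EuclideanSpace ℝ (Fin d) | (n : ℝ) < |f x|}) = ∅ := by
      ext x
      simp only [mem_iInter, mem_setOf_eq, mem_empty_iff_false, iff_false, not_forall, not_lt]
      obtain ⟨n, hn⟩ := exists_nat_gt (|f x|)
      exact ⟨n, hn.le⟩
    have hanti : Antitone fun n : ℕ => {x : EuclideanSpace ℝ (Fin d) | (n : ℝ) < |f x|} := by
      intro n m hnm x hx
      simp only [mem_setOf_eq] at *
      have : (n : ℝ) ≤ m := by exact_mod_cast hnm
      linarith
    have htend : Filter.Tendsto (fun n : ℕ => D n) Filter.atTop (nhds 0) := by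
      have := tendsto_measure_iInter_atTop
        (μ := ν) (s := fun n : ℕ => {x : EuclideanSpace ℝ (Fin d) | (n : ℝ) < |f x|})
        (fun n => (measurableSet_lt measurable_const habs).nullMeasurableSet)
        hanti ⟨1, by simpa [hD, distFun] using (hDfin 1 (by norm_num)).ne⟩
      rwa [hInt, measure_empty] at this
    have hev := htend.eventually_lt_const (ENNReal.ofReal_pos.mpr ht)
    obtain ⟨n, hn⟩ := hev.exists
    exact ⟨n, Nat.cast_nonneg n, hn.le⟩
  -- key characterization
  have hkey : ∀ s t : ℝ, 0 < s → 0 < t → (s < r t ↔ ENNReal.ofReal t < D s) := by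
    intro s t hs ht
    constructor
    · intro h
      by_contra hcon
      push_neg at hcon
      have hle : r t ≤ s := by
        rw [hr, decreasingRearrangement_eq]
        exact csInf_le ⟨0, fun y hy => hy.1⟩ ⟨hs.le, hcon⟩
      linarith
    · intro h
      rw [hD, distFun_iSup] at h
      obtain ⟨n, hn⟩ := lt_iSup_iff.mp h
      have hlt : s < s + 1 / ((n : ℝ) + 1) := lt_add_of_pos_right _ (by positivity)
      have hlb : ∀ y ∈ {s' : ℝ | 0 ≤ s' ∧ distFun ν f s' ≤ ENNReal.ofReal t},
          s + 1 / ((n : ℝ) + 1) ≤ y := by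
        intro y hy
        by_contra hcon
        push_neg at hcon
        have h2 : distFun ν f (s + 1 / ((n : ℝ) + 1)) ≤ distFun ν f y :=
          distFun_antitone ν f hcon.le
        exact absurd (h2.trans hy.2) (not_le.mpr hn)
      have h3 : s + 1 / ((n : ℝ) + 1) ≤ r t := by
        rw [hr, decreasingRearrangement_eq]
        exact le_csInf (hSne t ht) hlb
      linarith
  -- equimeasurability
  have hequi : ∀ s : ℝ, 0 < s →
      (volume.restrict (Ioi (0 : ℝ))) {t | s < r t} = D s := by
    intro s hs
    rw [Measure.restrict_apply' measurableSet_Ioi]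
    have hset : {t : ℝ | s < r t} ∩ Ioi 0 = Ioo 0 ((D s).toReal) := by
      ext t
      simp only [mem_inter_iff, mem_setOf_eq, mem_Ioi, mem_Ioo]
      constructor
      · rintro ⟨h1, h2⟩
        refine ⟨h2, ?_⟩
        have := (hkey s t hs h2).mp h1
        rw [← ENNReal.ofReal_lt_iff_lt_toReal h2.le (hDfin s hs).ne] at *
        exact this
      · rintro ⟨h1, h2⟩
        refine ⟨(hkey s t hs h1).mpr ?_, h1⟩
        exact (ENNReal.ofReal_lt_iff_lt_toReal h1.le (hDfin s hs).ne).mpr h2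
    rw [hset, Real.volume_Ioo, sub_zero,
      ENNReal.ofReal_toReal (hDfin s hs).ne]
  -- measurability of r on Ioi 0
  have hrmble : AEMeasurable r (volume.restrict (Ioi (0 : ℝ))) := by
    apply aemeasurable_restrict_of_antitoneOn measurableSet_Ioi
    intro t ht t' ht' htt'
    rw [hr, decreasingRearrangement_eq, decreasingRearrangement_eq]
    apply csInf_le_csInf ⟨0, fun y hy => hy.1⟩ (hSne t ht)
    intro y hy
    exact ⟨hy.1, hy.2.trans (ENNReal.ofReal_le_ofReal htt')⟩
  have hrnn : ∀ t, 0 ≤ r t := fun t => decreasingRearrangement_nonneg ν f t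
  -- layer cake on both sides
  have hL : ∫⁻ x, ENNReal.ofReal (|f x| ^ p) ∂ν =
      ENNReal.ofReal p *
        ∫⁻ s in Ioi (0 : ℝ), ν {a | s < |f a|} * ENNReal.ofReal (s ^ (p - 1)) :=
    lintegral_rpow_eq_lintegral_meas_lt_mul ν
      (Filter.Eventually.of_forall fun x => abs_nonneg (f x)) habs.aemeasurable hp0
  have hR : ∫⁻ t in Ioi (0 : ℝ), ENNReal.ofReal (r t ^ p) =
      ENNReal.ofReal p *
        ∫⁻ s in Ioi (0 : ℝ),
          (volume.restrict (Ioi (0 : ℝ))) {t | s < r t} * ENNReal.ofReal (s ^ (p - 1)) :=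
    lintegral_rpow_eq_lintegral_meas_lt_mul (volume.restrict (Ioi (0 : ℝ)))
      (Filter.Eventually.of_forall hrnn) hrmble hp0
  have hlintEq : ∫⁻ x, ENNReal.ofReal (|f x| ^ p) ∂ν =
      ∫⁻ t in Ioi (0 : ℝ), ENNReal.ofReal (r t ^ p) := by
    rw [hL, hR]
    congr 1
    apply setLIntegral_congr_fun measurableSet_Ioi
    exact fun s hs => by rw [hequi s hs]; rfl
  -- convert to Bochner integrals
  rw [integral_eq_lintegral_of_nonneg_ae
      (Filter.Eventually.of_forall fun x => Real.rpow_nonneg (abs_nonneg (f x)) p)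
      hint.aestronglyMeasurable,
    integral_eq_lintegral_of_nonneg_ae
      (Filter.Eventually.of_forall fun t => Real.rpow_nonneg (hrnn t) p)
      ((hpowM.comp_aemeasurable hrmble).aestronglyMeasurable),
    hlintEq]
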